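/- Let s and t be coprime positive integers. The set A = ℕ \ (sℕ + tℕ) of nonnegative integers not representable as a nonnegative integer combination of s and t has exactly (s−1)(t−1)/2 elements. -/

import Mathlib

private lemma rep_sym (s t : ℕ) (hs : 2 ≤ s) (ht : 2 ≤ t) (hst : Nat.Coprime s t)
    (n : ℕ) (hn : n ≤ s * t - s - t) (hrep : ¬ ∃ a b : ℕ, n = a * s + b * t) :
    ∃ a b : ℕ, s * t - s - t - n = a * s + b * t := by
  have ht0 : 0 < t := by omega
  haveI : NeZero t := ⟨by omega⟩
  have hsu : IsUnit (s : ZMod t) := (ZMod.isUnit_iff_coprime s t).mpr hst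
  set a : ℕ := ((n : ZMod t) * (hsu.unit⁻¹ : (ZMod t)ˣ)).val with ha
  have halt : a < t := ZMod.val_lt _
  have hmod : a * s ≡ n [MOD t] := by
    have : ((a * s : ℕ) : ZMod t) = (n : ZMod t) := by
      push_cast
      rw [ha, ZMod.natCast_val, ZMod.cast_id]
      calc (n : ZMod t) * (hsu.unit⁻¹ : (ZMod t)ˣ) * s
          = (n : ZMod t) * ((hsu.unit⁻¹ : (ZMod t)ˣ) * hsu.unit) := by
            rw [mul_assoc]; norm_cast
        _ = n := by simp
    exact (ZMod.natCast_eq_natCast_iff _ _ _).mp this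
  have hlt : n < a * s := by
    by_contra h
    push_neg at h
    obtain ⟨b, hb⟩ := (Nat.modEq_iff_dvd' h).mp hmod
    refine hrep ⟨a, b, ?_⟩
    rw [Nat.mul_comm t b] at hb
    omega
  obtain ⟨k, hk⟩ := (Nat.modEq_iff_dvd' hlt.le).mp hmod.symm
  have hk1 : 1 ≤ k := by
    rcases Nat.eq_zero_or_pos k with h | h
    · rw [h, Nat.mul_zero] at hk; omega
    · exact h
  have has : a * s = n + t * k := by omega
  have hmul : s + t ≤ s * t := Nat.add_le_mul hs ht
  refine ⟨t - 1 - a, k - 1, ?_⟩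
  set m := s * t - s - t - n with hm
  have hmn : m + n + s + t = s * t := by omega
  obtain ⟨a', ha'⟩ : ∃ a', t = a' + 1 + a := ⟨t - 1 - a, by omega⟩
  obtain ⟨k', hk'⟩ : ∃ k', k = k' + 1 := ⟨k - 1, by omega⟩
  have ha'' : t - 1 - a = a' := by omega
  have hk'' : k - 1 = k' := by omega
  rw [ha'', hk'']
  have key : (m : ℤ) = a' * s + k' * t := by
    have e1 : (t : ℤ) = a' + 1 + a := by exact_mod_cast ha'
    have e2 : (m : ℤ) + n + s + t = s * t := by exact_mod_cast hmn
    have e3 : (a : ℤ) * s = n + t * k := by exact_mod_cast has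
    have e4 : (k : ℤ) = k' + 1 := by exact_mod_cast hk'
    linear_combination e2 + (s : ℤ) * e1 + e3 + (t : ℤ) * e4
  exact_mod_cast key

theorem stmt10 (s t : ℕ) (hs : 0 < s) (ht : 0 < t) (hst : Nat.Coprime s t)
    (A : Finset ℕ) (hA : ∀ n : ℕ, n ∈ A ↔ ¬ ∃ a b : ℕ, n = a * s + b * t) :
    A.card * 2 = (s - 1) * (t - 1) := by
  classical
  rcases eq_or_lt_of_le (show 1 ≤ s from hs) with h1 | hs2
  · have : A = ∅ := by
      ext n; simp only [Finset.notMem_empty, iff_false, hA, not_not]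
      exact ⟨n, 0, by rw [← h1]; ring⟩
    simp [this, ← h1]
  rcases eq_or_lt_of_le (show 1 ≤ t from ht) with h1 | ht2
  · have : A = ∅ := by
      ext n; simp only [Finset.notMem_empty, iff_false, hA, not_not]
      exact ⟨0, n, by rw [← h1]; ring⟩
    simp [this, ← h1]
  set F := s * t - s - t with hF
  have hmul : s + t ≤ s * t := Nat.add_le_mul hs2 ht2
  have hFrob := frobeniusNumber_pair hst hs2 ht2
  have hFnotrep : ¬ ∃ a b : ℕ, F = a * s + b * t := by
    rintro ⟨a, b, hab⟩
    refine hst.mul_add_mul_ne_mul (a := a + 1) (b := b + 1) (by omega) (by omega) ?_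
    calc (a + 1) * s + (b + 1) * t = (a * s + b * t) + s + t := by ring
      _ = s * t := by omega
  have hbig : ∀ n, F < n → ∃ a b : ℕ, n = a * s + b * t := by
    intro n hn
    by_contra h
    have : n ∈ AddSubmonoid.closure ({s, t} : Set ℕ) := by
      by_contra h2
      exact absurd (hFrob.2 h2) (by omega)
    obtain ⟨a, b, hab⟩ := (AddSubmonoid.mem_closure_pair s t n).mp this
    exact h ⟨a, b, by simpa [smul_eq_mul, mul_comm] using hab.symm⟩
  have hsub : A ⊆ Finset.range (F + 1) := by
    intro n hn
    rw [hA] at hn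
    rw [Finset.mem_range]
    by_contra h
    exact hn (hbig n (by omega))
  have hAeq : A = (Finset.range (F + 1)).filter
      (fun n => ¬ ∃ a b : ℕ, n = a * s + b * t) := by
    ext n
    simp only [Finset.mem_filter, hA]
    constructor
    · intro h; exact ⟨hsub ((hA n).mpr h), h⟩
    · exact fun h => h.2
  set B := (Finset.range (F + 1)).filter (fun n => ∃ a b : ℕ, n = a * s + b * t) with hB
  have hcardsum : B.card + A.card = F + 1 := by
    have h := Finset.card_filter_add_card_filter_not
      (s := Finset.range (F + 1)) (p := fun n => ∃ a b : ℕ, n = a * s + b * t)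
    rw [Finset.card_range] at h
    rw [hAeq, hB]
    convert h using 3
  have hbij : A.card = B.card := by
    apply Finset.card_bij (fun n _ => F - n)
    · intro n hn
      rw [hAeq, Finset.mem_filter, Finset.mem_range] at hn
      rw [hB, Finset.mem_filter, Finset.mem_range]
      exact ⟨by omega, rep_sym s t hs2 ht2 hst n (by omega) hn.2⟩
    · intro n1 h1 n2 h2 h
      rw [hAeq, Finset.mem_filter, Finset.mem_range] at h1 h2
      omega
    · intro m hm
      rw [hB, Finset.mem_filter, Finset.mem_range] at hm
      obtain ⟨hmlt, a, b, hab⟩ := hm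
      refine ⟨F - m, ?_, by omega⟩
      rw [hAeq, Finset.mem_filter, Finset.mem_range]
      refine ⟨by omega, ?_⟩
      rintro ⟨a', b', hab'⟩
      refine hFnotrep ⟨a + a', b + b', ?_⟩
      calc F = m + (F - m) := by omega
        _ = (a * s + b * t) + (a' * s + b' * t) := by rw [← hab, ← hab']
        _ = (a + a') * s + (b + b') * t := by ring
  have hN : F + 1 = (s - 1) * (t - 1) := by
    obtain ⟨s', rfl⟩ : ∃ s', s = s' + 1 := ⟨s - 1, by omega⟩
    obtain ⟨t', rfl⟩ : ∃ t', t = t' + 1 := ⟨t - 1, by omega⟩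
    simp only [Nat.add_sub_cancel, hF]
    have : (s' + 1) * (t' + 1) = s' * t' + s' + t' + 1 := by ring
    omega
  omega
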